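/- Let U ⊆ S^m_d be a quasi-stable monomial module and G a P(U)-marked set. Then for every degree s the A-module (S^m_d)_s decomposes as a direct sum (S^m_d)_s = ⟨G^{(s)}⟩^A ⊕ ⟨N(U)_s⟩^A. -/

import Mathlib

open MvPolynomial

namespace MB

/-- Exponent (multi-index) of a term in the variables `x_0, …, x_n`. -/
abbrev Exp (n : ℕ) := Fin (n+1) →₀ ℕ

variable {n : ℕ}

/-- Total degree of a term. -/
def degE (α : Exp n) : ℕ := α.sum fun _ e => e

/-- `x_i` is a multiplicative variable for the term `x^α`, i.e. `x_i ≤ min(x^α)`. -/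
def mult (α : Exp n) (i : Fin (n+1)) : Prop := ∀ j ∈ α.support, i ≤ j

/-- Every variable occurring in `x^δ` is multiplicative for `x^α`. -/
def multExp (α δ : Exp n) : Prop := ∀ i ∈ δ.support, mult α i

/-- Pommaret cone of a term. -/
def pommaretCone (α : Exp n) : Set (Exp n) := {γ | ∃ δ, multExp α δ ∧ γ = α + δ}

/-- A set of terms is (the set of terms of) a monomial ideal. -/
def IsMonomialIdeal (T : Set (Exp n)) : Prop := ∀ α ∈ T, ∀ β, α + β ∈ T

/-- `P` is a Pommaret basis of the set of terms `T`: the terms of `T` are the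
disjoint union of the Pommaret cones of the elements of `P`. -/
def IsPommaretBasis (P : Finset (Exp n)) (T : Set (Exp n)) : Prop :=
  (∀ γ, γ ∈ T ↔ ∃ α ∈ P, γ ∈ pommaretCone α) ∧
  ∀ γ : Exp n, ∀ α ∈ P, ∀ β ∈ P, γ ∈ pommaretCone α → γ ∈ pommaretCone β → α = β

/-- Lexicographic order on terms (with `x_n > … > x_0` significance). -/
def lexLt (η δ : Exp n) : Prop := ∃ i, η i < δ i ∧ ∀ j, i < j → η j = δ j

/-- Terms of the saturation `(J : (x_0,…,x_n)^∞)` of a monomial ideal. -/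
def satTerms (T : Set (Exp n)) : Set (Exp n) :=
  {α | ∃ j : ℕ, ∀ β : Exp n, degE β = j → α + β ∈ T}

section ModuleDefs

variable (A : Type*) [CommRing A] {κ : Type*} [Fintype κ] [DecidableEq κ]

/-- The term `x^α e_k` of the free module. -/
noncomputable def termV (α : Exp n) (k : κ) : κ → MvPolynomial (Fin (n+1)) A :=
  Pi.single k (monomial α 1)

variable {A}

/-- Homogeneity of degree `s` in `S^m_d` (with weight vector `d`). -/
def IsHomogV (d : κ → ℤ) (f : κ → MvPolynomial (Fin (n+1)) A) (s : ℤ) : Prop :=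
  ∀ k, ∀ β ∈ (f k).support, (degE β : ℤ) + d k = s

variable (A)

/-- The degree-`s` component `(S^m_d)_s` as an `A`-submodule. -/
noncomputable def homogCompV (d : κ → ℤ) (s : ℤ) :
    Submodule A (κ → MvPolynomial (Fin (n+1)) A) where
  carrier := {f | IsHomogV d f s}
  add_mem' := by
    intro f g hf hg k β hβ
    rcases Finset.mem_union.mp (MvPolynomial.support_add hβ) with h | h
    · exact hf k β h
    · exact hg k β h
  zero_mem' := by intro k β hβ; simp at hβ
  smul_mem' := by
    intro a f hf k β hβ
    exact hf k β (MvPolynomial.support_smul hβ)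

/-- The set `N(U)` of terms of `S^m_d` not belonging to the monomial module `U = ⊕ J^(k) e_k`. -/
def NUTerms (J : κ → Set (Exp n)) : Set (κ → MvPolynomial (Fin (n+1)) A) :=
  {v | ∃ k, ∃ α, α ∉ J k ∧ v = termV A α k}

/-- The degree-`s` part `N(U)_s`. -/
def NUTermsDeg (d : κ → ℤ) (J : κ → Set (Exp n)) (s : ℤ) :
    Set (κ → MvPolynomial (Fin (n+1)) A) :=
  {v | ∃ k, ∃ α, α ∉ J k ∧ (degE α : ℤ) + d k = s ∧ v = termV A α k}

variable {A}

/-- A `P(U)`-marked set: for each `x^α e_k` with `α ∈ P k`, the element `g α k` has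
head term `x^α e_k` (coefficient `1`) and all other terms in `N(U)` of the same degree. -/
def IsMarkedSetV (d : κ → ℤ) (J : κ → Set (Exp n)) (P : κ → Finset (Exp n))
    (g : Exp n → κ → (κ → MvPolynomial (Fin (n+1)) A)) : Prop :=
  ∀ k, ∀ α ∈ P k, ∀ l, ∀ β ∈ ((g α k - termV A α k) l).support,
    β ∉ J l ∧ (degE β : ℤ) + d l = (degE α : ℤ) + d k

/-- The underlying set of elements of the marked set `G`. -/
def GSet (P : κ → Finset (Exp n)) (g : Exp n → κ → (κ → MvPolynomial (Fin (n+1)) A)) :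
    Set (κ → MvPolynomial (Fin (n+1)) A) :=
  {v | ∃ k, ∃ α ∈ P k, v = g α k}

/-- The set `G^(s)` of multiplicative multiples of elements of `G` of degree `s`. -/
def GSdeg (d : κ → ℤ) (P : κ → Finset (Exp n))
    (g : Exp n → κ → (κ → MvPolynomial (Fin (n+1)) A)) (s : ℤ) :
    Set (κ → MvPolynomial (Fin (n+1)) A) :=
  {v | ∃ k, ∃ α ∈ P k, ∃ δ : Exp n, multExp α δ ∧
    (degE δ : ℤ) + (degE α : ℤ) + d k = s ∧ v = (monomial δ (1:A)) • g α k}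

/-- The `S`-submodule `⟨G⟩` generated by the marked set. -/
noncomputable def GmodS (P : κ → Finset (Exp n))
    (g : Exp n → κ → (κ → MvPolynomial (Fin (n+1)) A)) :
    Submodule (MvPolynomial (Fin (n+1)) A) (κ → MvPolynomial (Fin (n+1)) A) :=
  Submodule.span _ (GSet P g)

/-- The degree-`s` component `⟨G⟩_s` as an `A`-submodule. -/
noncomputable def GmodDeg (d : κ → ℤ) (P : κ → Finset (Exp n))
    (g : Exp n → κ → (κ → MvPolynomial (Fin (n+1)) A)) (s : ℤ) :
    Submodule A (κ → MvPolynomial (Fin (n+1)) A) :=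
  (GmodS P g).restrictScalars A ⊓ homogCompV A d s

/-- `G` is a marked basis: `(S^m_d)_s = ⟨G⟩_s ⊕ ⟨N(U)_s⟩^A` for every degree `s`. -/
def MarkedBasisProp (d : κ → ℤ) (J : κ → Set (Exp n)) (P : κ → Finset (Exp n))
    (g : Exp n → κ → (κ → MvPolynomial (Fin (n+1)) A)) : Prop :=
  ∀ s : ℤ,
    homogCompV A d s = GmodDeg d P g s ⊔ Submodule.span A (NUTermsDeg A d J s) ∧
    GmodDeg d P g s ⊓ Submodule.span A (NUTermsDeg A d J s) = ⊥

/-- One step of the reduction relation `→_G`. -/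
def RedStep (P : κ → Finset (Exp n)) (g : Exp n → κ → (κ → MvPolynomial (Fin (n+1)) A))
    (h h' : κ → MvPolynomial (Fin (n+1)) A) : Prop :=
  ∃ k, ∃ α ∈ P k, ∃ η : Exp n, multExp α η ∧
    (h k).coeff (η + α) ≠ 0 ∧
    h' = h - ((h k).coeff (η + α)) • ((monomial η (1:A)) • g α k)

end ModuleDefs

section IdealDefs

variable {A : Type*} [CommRing A]

/-- A `P(J)`-marked set of polynomials. -/
def IsMarkedSetI (T : Set (Exp n)) (P : Finset (Exp n))
    (g : Exp n → MvPolynomial (Fin (n+1)) A) : Prop :=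
  ∀ α ∈ P, ∀ β ∈ (g α - monomial α (1:A)).support, β ∉ T ∧ degE β = degE α

variable (A)

/-- The degree-`s` monomials not in `T`. -/
def NTermsDegI (T : Set (Exp n)) (s : ℕ) : Set (MvPolynomial (Fin (n+1)) A) :=
  {p | ∃ β, β ∉ T ∧ degE β = s ∧ p = monomial β (1:A)}

variable {A}

/-- Degree-`s` part of the ideal generated by the marked set. -/
noncomputable def IdealDegI (P : Finset (Exp n)) (g : Exp n → MvPolynomial (Fin (n+1)) A)
    (s : ℕ) : Submodule A (MvPolynomial (Fin (n+1)) A) :=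
  (Ideal.span (g '' ↑P)).restrictScalars A ⊓ homogeneousSubmodule (Fin (n+1)) A s

/-- A `P(J)`-marked basis of polynomials: `S_s = (G)_s ⊕ ⟨N(J)_s⟩^A` for all `s`. -/
def IsMarkedBasisI (T : Set (Exp n)) (P : Finset (Exp n))
    (g : Exp n → MvPolynomial (Fin (n+1)) A) : Prop :=
  IsMarkedSetI T P g ∧ ∀ s : ℕ,
    homogeneousSubmodule (Fin (n+1)) A s
      = IdealDegI P g s ⊔ Submodule.span A (NTermsDegI A T s) ∧
    IdealDegI P g s ⊓ Submodule.span A (NTermsDegI A T s) = ⊥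

/-- The polynomial `p` involves only multiplicative variables of `x^α`. -/
def multPoly (α : Exp n) (p : MvPolynomial (Fin (n+1)) A) : Prop :=
  ∀ β ∈ p.support, multExp α β

end IdealDefs

section SyzDefs

variable {A : Type*} [CommRing A]

/-- The map `(c_l) ↦ Σ_l c_l f_{α(l)}` whose kernel is `Syz(G)`. -/
noncomputable def syzMap (P : Finset (Exp n)) (g : Exp n → MvPolynomial (Fin (n+1)) A) :
    (↥P → MvPolynomial (Fin (n+1)) A) →ₗ[MvPolynomial (Fin (n+1)) A]
      MvPolynomial (Fin (n+1)) A where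
  toFun c := ∑ l : ↥P, c l * g l.1
  map_add' c c' := by simp [add_mul, Finset.sum_add_distrib]
  map_smul' a c := by simp [Finset.mul_sum, mul_assoc]

/-- Weight vector for the syzygy module: `d_l = deg x^{α(l)}`. -/
def ddeg (P : Finset (Exp n)) : ↥P → ℤ := fun l => (degE l.1 : ℤ)

/-- Terms of the monomial ideal generated by the nonmultiplicative variables of `x^{α(l)}`. -/
def Jsyz (P : Finset (Exp n)) : ↥P → Set (Exp n) :=
  fun l => {β | ∃ i ∈ β.support, ¬ mult (l : Exp n) i}

open Classical in
/-- The claimed Pommaret basis `{x_i e_l : x_i nonmultiplicative for x^{α(l)}}`. -/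
noncomputable def Psyz (P : Finset (Exp n)) : ↥P → Finset (Exp n) := fun l =>
  (Finset.univ.filter fun i : Fin (n+1) => ¬ mult (l : Exp n) i).image
    fun i => Finsupp.single i 1

open Classical in
/-- The syzygy `S_{k;i} = x_i e_k − Σ_l P_l^{k;i} e_l`. -/
noncomputable def Ssyz (P : Finset (Exp n))
    (Pc : ↥P → Fin (n+1) → ↥P → MvPolynomial (Fin (n+1)) A)
    (k : ↥P) (i : Fin (n+1)) : ↥P → MvPolynomial (Fin (n+1)) A :=
  fun l => (if l = k then (X i : MvPolynomial (Fin (n+1)) A) else 0) - Pc k i l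

/-- The set `G_Syz^(s)`. -/
def GSyzDeg (P : Finset (Exp n))
    (Pc : ↥P → Fin (n+1) → ↥P → MvPolynomial (Fin (n+1)) A) (s : ℤ) :
    Set (↥P → MvPolynomial (Fin (n+1)) A) :=
  {v | ∃ k : ↥P, ∃ i : Fin (n+1), ¬ mult (k : Exp n) i ∧ ∃ δ : Exp n,
    (∀ j ∈ δ.support, j ≤ i) ∧ (degE δ : ℤ) + 1 + ddeg P k = s ∧
    v = (monomial δ (1:A)) • Ssyz P Pc k i}

end SyzDefs


section Aux

variable {n : ℕ}

lemma degE_add (α β : Exp n) : degE (α + β) = degE α + degE β := by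
  classical
  simp only [degE]
  exact Finsupp.sum_add_index' (fun _ => rfl) (fun _ _ _ => rfl)

lemma apply_le_degE (α : Exp n) (j : Fin (n+1)) : α j ≤ degE α := by
  by_cases h : α j = 0
  · simp [h]
  · rw [degE, Finsupp.sum]
    exact Finset.single_le_sum (fun _ _ => Nat.zero_le _) (Finsupp.mem_support_iff.mpr h)

lemma lexLt_trichotomy (η δ : Exp n) : lexLt η δ ∨ η = δ ∨ lexLt δ η := by
  classical
  by_cases h : η = δ
  · exact Or.inr (Or.inl h)
  have hne : ∃ j, η j ≠ δ j := by
    by_contra hall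
    push_neg at hall
    exact h (Finsupp.ext hall)
  set Sf : Finset (Fin (n+1)) := Finset.univ.filter (fun j => η j ≠ δ j) with hSf
  have hSne : Sf.Nonempty := ⟨hne.choose, by simp [hSf, hne.choose_spec]⟩
  set i := Sf.max' hSne with hi_def
  have hi : η i ≠ δ i := (Finset.mem_filter.mp (Sf.max'_mem hSne)).2
  have hup : ∀ j, i < j → η j = δ j := by
    intro j hj
    by_contra hx
    have hjS : j ∈ Sf := by simp [hSf, hx]
    exact absurd (Finset.le_max' Sf j hjS) (not_le.mpr hj)
  rcases lt_or_gt_of_ne hi with h1 | h1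
  · exact Or.inl ⟨i, h1, hup⟩
  · exact Or.inr (Or.inr ⟨i, h1, fun j hj => (hup j hj).symm⟩)

lemma keyLemma {J : Set (Exp n)} {P : Finset (Exp n)} (hPB : IsPommaretBasis P J)
    {β δ α' δ' : Exp n} (hβ : β ∉ J) (hα' : α' ∈ P) (hm : multExp α' δ')
    (heq : δ + β = α' + δ') : lexLt δ' δ := by
  have hcomp : ∀ j, δ j + β j = α' j + δ' j := by
    intro j
    have := DFunLike.congr_fun heq j
    simpa [Finsupp.add_apply] using this
  rcases lexLt_trichotomy δ' δ with h | h | h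
  · exact h
  · exfalso
    have hβα : β = α' := by
      have h2 : δ + β = δ + α' := by rw [heq, h, add_comm]
      exact add_left_cancel h2
    refine hβ ((hPB.1 β).mpr ⟨α', hα', 0, ?_, by rw [hβα, add_zero]⟩)
    intro i hi
    simp at hi
  · exfalso
    obtain ⟨i, hi, hup⟩ := h
    have hα'supp : ∀ t ∈ α'.support, i ≤ t :=
      hm i (Finsupp.mem_support_iff.mpr (by omega : δ' i ≠ 0))
    have hle : α' ≤ β := by
      rw [Finsupp.le_iff]
      intro j hj
      rcases lt_trichotomy j i with hji | rfl | hji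
      · exact absurd (hα'supp j hj) (not_le.mpr hji)
      · have := hcomp j; omega
      · have h1 := hup j hji
        have h2 := hcomp j
        omega
    refine hβ ((hPB.1 β).mpr ⟨α', hα', β - α', ?_, (add_tsub_cancel_of_le hle).symm⟩)
    intro j hj t ht
    have hjle : j ≤ i := by
      by_contra hgt
      push_neg at hgt
      have h1 := hup j hgt
      have h2 := hcomp j
      have h3 : (β - α') j = 0 := by rw [Finsupp.tsub_apply]; omega
      exact (Finsupp.mem_support_iff.mp hj) h3
    exact le_trans hjle (hα'supp t ht)

/-- Base-`(B+1)` encoding of an exponent. -/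
def mEnc (B : ℕ) (δ : Exp n) : ℕ :=
  ∑ j ∈ Finset.range (n+1), (if h : j < n+1 then δ ⟨j, h⟩ else 0) * (B+1)^j

lemma geoAux (B : ℕ) : ∀ i : ℕ, (∑ j ∈ Finset.range i, B * (B+1)^j) + 1 = (B+1)^i
  | 0 => by simp
  | i+1 => by
    rw [Finset.sum_range_succ, add_right_comm, geoAux B i, pow_succ]
    ring

lemma mEnc_lt {B : ℕ} {η δ : Exp n} (hb : ∀ j, η j ≤ B) (h : lexLt η δ) :
    mEnc B η < mEnc B δ := by
  obtain ⟨i, hlt, hup⟩ := h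
  set F : Exp n → ℕ → ℕ := fun x j => (if h : j < n+1 then x ⟨j, h⟩ else 0) * (B+1)^j with hF
  have hiv : (i : ℕ) < n + 1 := i.isLt
  have hsplit : ∀ x : Exp n, mEnc B x
      = (∑ j ∈ Finset.range (i : ℕ), F x j) + F x (i : ℕ)
        + ∑ j ∈ Finset.Ico ((i : ℕ)+1) (n+1), F x j := by
    intro x
    have h1 : mEnc B x = ∑ j ∈ Finset.Ico 0 (n+1), F x j := by
      rw [mEnc, Finset.range_eq_Ico]
    have h2 : (∑ j ∈ Finset.Ico 0 (i : ℕ), F x j) + ∑ j ∈ Finset.Ico (i : ℕ) (n+1), F x j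
        = ∑ j ∈ Finset.Ico 0 (n+1), F x j :=
      Finset.sum_Ico_consecutive _ (Nat.zero_le _) (le_of_lt hiv)
    have h3 : ∑ j ∈ Finset.Ico (i : ℕ) (n+1), F x j
        = F x (i : ℕ) + ∑ j ∈ Finset.Ico ((i : ℕ)+1) (n+1), F x j :=
      Finset.sum_eq_sum_Ico_succ_bot hiv _
    rw [h1, ← h2, h3, ← Finset.range_eq_Ico]
    ring
  have hT : (∑ j ∈ Finset.Ico ((i : ℕ)+1) (n+1), F η j)
      = ∑ j ∈ Finset.Ico ((i : ℕ)+1) (n+1), F δ j := by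
    refine Finset.sum_congr rfl fun j hj => ?_
    obtain ⟨hj1, hj2⟩ := Finset.mem_Ico.mp hj
    rw [hF]
    simp only [hj2, dif_pos]
    have hij : i < (⟨j, hj2⟩ : Fin (n+1)) := by
      rw [Fin.lt_def]; simpa using hj1
    rw [hup _ hij]
  have hlow : (∑ j ∈ Finset.range (i : ℕ), F η j) ≤ ∑ j ∈ Finset.range (i : ℕ), B * (B+1)^j := by
    refine Finset.sum_le_sum fun j hj => ?_
    rw [hF]
    refine Nat.mul_le_mul_right _ ?_
    split
    · exact hb _
    · exact Nat.zero_le _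
  have hgeo := geoAux B (i : ℕ)
  have hFi_η : F η (i : ℕ) = η i * (B+1)^(i : ℕ) := by
    rw [hF]; simp [hiv]
  have hFi_δ : F δ (i : ℕ) = δ i * (B+1)^(i : ℕ) := by
    rw [hF]; simp [hiv]
  have hmul : η i * (B+1)^(i : ℕ) + (B+1)^(i : ℕ) ≤ δ i * (B+1)^(i : ℕ) := by
    have : (η i + 1) * (B+1)^(i : ℕ) ≤ δ i * (B+1)^(i : ℕ) :=
      Nat.mul_le_mul_right _ hlt
    linarith [this, add_mul (η i) 1 ((B+1)^(i : ℕ))]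
  have h1 := hsplit η
  have h2 := hsplit δ
  omega

end Aux


section Aux2

variable {n : ℕ} {κ : Type*} [Fintype κ] [DecidableEq κ] {A : Type*} [CommRing A]

lemma termV_apply (α : Exp n) (k l : κ) :
    termV A α k l = if l = k then monomial α (1:A) else 0 :=
  Pi.single_apply k _ l

lemma smul_termV (δ α : Exp n) (k : κ) :
    (monomial δ (1:A)) • termV A α k = termV A (δ + α) k := by
  funext l
  rw [Pi.smul_apply, smul_eq_mul, termV_apply, termV_apply]
  by_cases h : l = k
  · rw [if_pos h, if_pos h, monomial_mul, one_mul]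
  · rw [if_neg h, if_neg h, mul_zero]

lemma vec_decomp (f : κ → MvPolynomial (Fin (n+1)) A) :
    f = ∑ k, ∑ β ∈ (f k).support, (f k).coeff β • termV A β k := by
  conv_lhs => rw [← Finset.univ_sum_single f]
  refine Finset.sum_congr rfl fun k _ => ?_
  conv_lhs => rw [← support_sum_monomial_coeff (f k)]
  have h1 : Pi.single (M := fun _ : κ => MvPolynomial (Fin (n+1)) A) k
      (∑ β ∈ (f k).support, monomial β ((f k).coeff β))
      = ∑ β ∈ (f k).support,
          Pi.single (M := fun _ : κ => MvPolynomial (Fin (n+1)) A) k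
            (monomial β ((f k).coeff β)) :=
    map_sum (LinearMap.single A (fun _ : κ => MvPolynomial (Fin (n+1)) A) k) _ _
  rw [h1]
  refine Finset.sum_congr rfl fun β _ => ?_
  have h2 : monomial β ((f k).coeff β) = (f k).coeff β • monomial β (1:A) := by
    rw [smul_monomial, smul_eq_mul, mul_one]
  rw [termV, h2, Pi.single_smul]

lemma smul_decomp (δ : Exp n) (f : κ → MvPolynomial (Fin (n+1)) A) :
    (monomial δ (1:A)) • f
      = ∑ k, ∑ β ∈ (f k).support, (f k).coeff β • termV A (δ + β) k := by
  conv_lhs => rw [vec_decomp f]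
  rw [Finset.smul_sum]
  refine Finset.sum_congr rfl fun k _ => ?_
  rw [Finset.smul_sum]
  refine Finset.sum_congr rfl fun β _ => ?_
  rw [smul_comm, smul_termV]

lemma mem_homogCompV_iff {d : κ → ℤ} {s : ℤ} {f : κ → MvPolynomial (Fin (n+1)) A} :
    f ∈ homogCompV A d s ↔ IsHomogV d f s := Iff.rfl

lemma termV_mem_homog {d : κ → ℤ} {s : ℤ} {γ : Exp n} {k : κ}
    (h : (degE γ : ℤ) + d k = s) : termV A γ k ∈ homogCompV A d s := by
  rw [mem_homogCompV_iff]
  intro l β hβ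
  rw [termV_apply] at hβ
  by_cases hl : l = k
  · rw [if_pos hl] at hβ
    have hβγ : β = γ := by
      by_contra hne
      have hc := MvPolynomial.mem_support_iff.mp hβ
      rw [coeff_monomial, if_neg (fun hh => hne hh.symm)] at hc
      exact hc rfl
    rw [hβγ, hl]
    exact h
  · rw [if_neg hl] at hβ
    simp at hβ

end Aux2

/-- Theorem `markedSetChar` (ii): `(S^m_d)_s = ⟨G^(s)⟩^A ⊕ ⟨N(U)_s⟩^A`. -/
theorem statement5 {n : ℕ} {κ : Type*} [Fintype κ] [DecidableEq κ] (hm : Nonempty κ)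
    {A : Type*} [CommRing A] [IsNoetherianRing A]
    (d : κ → ℤ) (J : κ → Set (Exp n)) (P : κ → Finset (Exp n))
    (hQS : ∀ k, IsMonomialIdeal (J k) ∧ IsPommaretBasis (P k) (J k))
    (gb : Exp n → κ → (κ → MvPolynomial (Fin (n+1)) A))
    (hG : IsMarkedSetV d J P gb) :
    ∀ s : ℤ,
      homogCompV A d s
        = Submodule.span A (GSdeg d P gb s) ⊔ Submodule.span A (NUTermsDeg A d J s) ∧
      Submodule.span A (GSdeg d P gb s) ⊓ Submodule.span A (NUTermsDeg A d J s) = ⊥ := by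
  classical
  intro s
  set B : ℕ := Finset.univ.sup (fun k : κ => (s - d k).toNat) with hB
  have hbound : ∀ (k : κ) (δ : Exp n), (degE δ : ℤ) ≤ s - d k → degE δ ≤ B := by
    intro k δ h
    have h0 : (0:ℤ) ≤ s - d k := le_trans (Int.natCast_nonneg _) h
    have h1 : (s - d k).toNat ≤ B := by
      rw [hB]; exact Finset.le_sup (f := fun k : κ => (s - d k).toNat) (Finset.mem_univ k)
    exact le_trans ((Int.le_toNat h0).mpr h) h1
  have hcover : ∀ (k : κ) (α : Exp n), α ∈ P k → ∀ δ : Exp n, multExp α δ → α + δ ∈ J k :=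
    fun k α hα δ hδ => ((hQS k).2.1 _).mpr ⟨α, hα, δ, hδ, rfl⟩
  have hkey : ∀ (l : κ) {β δ α' δ' : Exp n}, β ∉ J l → α' ∈ P l → multExp α' δ' →
      δ + β = α' + δ' → lexLt δ' δ := by
    intro l β δ α' δ' hβ hα' hmm heq
    exact keyLemma (hQS l).2 hβ hα' hmm heq
  have hgb : ∀ (α : Exp n) (k : κ), gb α k = termV A α k + (gb α k - termV A α k) := by
    intro α k; abel
  have hv : ∀ (k : κ) (α δ : Exp n), (monomial δ (1:A)) • gb α k
      = termV A (δ + α) k + ∑ l, ∑ β ∈ ((gb α k - termV A α k) l).support,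
          ((gb α k - termV A α k) l).coeff β • termV A (δ + β) l := by
    intro k α δ
    conv_lhs => rw [hgb α k]
    rw [smul_add, smul_termV, smul_decomp]
  have main : ∀ N : ℕ, ∀ (k : κ) (α δ : Exp n), α ∈ P k → multExp α δ →
      (degE δ : ℤ) + (degE α : ℤ) + d k = s → mEnc B δ ≤ N →
      termV A (α + δ) k ∈ Submodule.span A (GSdeg d P gb s)
        ⊔ Submodule.span A (NUTermsDeg A d J s) := by
    intro N
    induction N using Nat.strong_induction_on with
    | _ N IH =>
    intro k α δ hα hmδ hdeg hN
    have hgenmem : (monomial δ (1:A)) • gb α k ∈ Submodule.span A (GSdeg d P gb s) :=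
      Submodule.subset_span ⟨k, α, hα, δ, hmδ, hdeg, rfl⟩
    have heq2 : termV A (α + δ) k = (monomial δ (1:A)) • gb α k
        - ∑ l, ∑ β ∈ ((gb α k - termV A α k) l).support,
            ((gb α k - termV A α k) l).coeff β • termV A (δ + β) l := by
      rw [hv, add_comm α δ]; abel
    rw [heq2]
    refine sub_mem (Submodule.mem_sup_left hgenmem)
      (Submodule.sum_mem _ fun l _ => Submodule.sum_mem _ fun β hβ =>
        Submodule.smul_mem _ _ ?_)
    obtain ⟨hβJ, hβdeg⟩ := hG k α hα l β hβ
    have hdeg2 : (degE (δ + β) : ℤ) + d l = s := by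
      rw [degE_add]; push_cast; push_cast at hβdeg hdeg; linarith
    by_cases hJ : δ + β ∈ J l
    · obtain ⟨α'', hα'', δ'', hm'', hdec⟩ := ((hQS l).2.1 _).mp hJ
      have hlex : lexLt δ'' δ := hkey l hβJ hα'' hm'' hdec
      have hdeg3 : (degE δ'' : ℤ) + (degE α'' : ℤ) + d l = s := by
        have h4 : (degE (α'' + δ'') : ℤ) + d l = s := by rw [← hdec]; exact hdeg2
        rw [degE_add] at h4; push_cast at h4 ⊢; linarith
      have hb'' : degE δ'' ≤ B := hbound l δ''
        (by push_cast at hdeg3 ⊢; linarith [Int.natCast_nonneg (degE α'')])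
      have henc : mEnc B δ'' < mEnc B δ :=
        mEnc_lt (fun j => le_trans (apply_le_degE δ'' j) hb'') hlex
      have hmem := IH (mEnc B δ'') (lt_of_lt_of_le henc hN) l α'' δ'' hα'' hm'' hdeg3 le_rfl
      rw [← hdec] at hmem
      exact hmem
    · exact Submodule.mem_sup_right (Submodule.subset_span ⟨l, δ + β, hJ, hdeg2, rfl⟩)
  constructor
  · apply le_antisymm
    · intro f hf
      have hf' : IsHomogV d f s := hf
      rw [vec_decomp f]
      refine Submodule.sum_mem _ fun k _ => Submodule.sum_mem _ fun β hβ =>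
        Submodule.smul_mem _ _ ?_
      have hdegβ : (degE β : ℤ) + d k = s := hf' k β hβ
      by_cases hJ : β ∈ J k
      · obtain ⟨α, hα, δ, hmδ, hdec⟩ := ((hQS k).2.1 _).mp hJ
        have hdeg3 : (degE δ : ℤ) + (degE α : ℤ) + d k = s := by
          have h4 : (degE (α + δ) : ℤ) + d k = s := by rw [← hdec]; exact hdegβ
          rw [degE_add] at h4; push_cast at h4 ⊢; linarith
        have hmem := main (mEnc B δ) k α δ hα hmδ hdeg3 le_rfl
        rw [← hdec] at hmem
        exact hmem
      · exact Submodule.mem_sup_right (Submodule.subset_span ⟨k, β, hJ, hdegβ, rfl⟩)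
    · refine sup_le (Submodule.span_le.mpr ?_) (Submodule.span_le.mpr ?_)
      · rintro v ⟨k, α, hα, δ, hmδ, hdeg, rfl⟩
        rw [SetLike.mem_coe, hv]
        apply Submodule.add_mem
        · exact termV_mem_homog
            (by rw [degE_add]; push_cast; push_cast at hdeg; linarith)
        · refine Submodule.sum_mem _ fun l _ => Submodule.sum_mem _ fun β hβ =>
            Submodule.smul_mem _ _ (termV_mem_homog (by
              obtain ⟨hβJ, hβdeg⟩ := hG k α hα l β hβ
              rw [degE_add]; push_cast; push_cast at hβdeg hdeg; linarith))
      · rintro v ⟨k, β, hβJ, hdegβ, rfl⟩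
        exact termV_mem_homog hdegβ
  · rw [eq_bot_iff]
    rintro x ⟨hx1, hx2⟩
    have hz : ∀ (k : κ) (γ : Exp n), γ ∈ J k → (x k).coeff γ = 0 := by
      have hle : Submodule.span A (NUTermsDeg A d J s) ≤
          ({ carrier := {y | ∀ (k : κ) (γ : Exp n), γ ∈ J k → (y k).coeff γ = 0},
             add_mem' := by
               intro a b ha hb k γ hγ
               simp only [Set.mem_setOf_eq] at ha hb ⊢
               rw [Pi.add_apply, MvPolynomial.coeff_add, ha k γ hγ, hb k γ hγ, add_zero]
             zero_mem' := by intro k γ hγ; simp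
             smul_mem' := by
               intro cc y hy k γ hγ
               simp only [Set.mem_setOf_eq] at hy ⊢
               rw [Pi.smul_apply, MvPolynomial.coeff_smul, hy k γ hγ, smul_zero] } :
            Submodule A (κ → MvPolynomial (Fin (n+1)) A)) := by
        rw [Submodule.span_le]
        rintro y ⟨l, β, hβ, hdegβ, rfl⟩
        intro k γ hγ
        rw [termV_apply]
        by_cases hkl : k = l
        · rw [if_pos hkl, coeff_monomial]
          by_cases hβγ : β = γ
          · exfalso
            apply hβ
            rw [hβγ]
            exact hkl ▸ hγ
          · rw [if_neg hβγ]
        · rw [if_neg hkl, coeff_zero]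
      exact fun k γ hγ => hle hx2 k γ hγ
    have hrange : GSdeg d P gb s
        = Set.range (fun i : {q : κ × Exp n × Exp n // q.2.1 ∈ P q.1 ∧ multExp q.2.1 q.2.2 ∧
            (degE q.2.2 : ℤ) + (degE q.2.1 : ℤ) + d q.1 = s} =>
              (monomial i.1.2.2 (1:A)) • gb i.1.2.1 i.1.1) := by
      ext m
      constructor
      · rintro ⟨k, α, hα, δ, hmδ, hdeg, rfl⟩
        exact ⟨⟨(k, α, δ), hα, hmδ, hdeg⟩, rfl⟩
      · rintro ⟨⟨⟨k, α, δ⟩, hα, hmδ, hdeg⟩, rfl⟩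
        exact ⟨k, α, hα, δ, hmδ, hdeg, rfl⟩
    rw [hrange] at hx1
    obtain ⟨c, hc⟩ := Finsupp.mem_span_range_iff_exists_finsupp.mp hx1
    suffices hc0 : c = 0 by
      rw [← hc, hc0, Finsupp.sum_zero_index]
      exact Submodule.zero_mem ⊥
    by_contra hcne
    obtain ⟨i₀, hi₀, hmax⟩ := Finset.exists_max_image c.support
        (fun i => mEnc B i.1.2.2) (Finsupp.support_nonempty_iff.mpr hcne)
    obtain ⟨hα₀, hm₀, hdeg₀⟩ := i₀.2
    have hγJ : i₀.1.2.2 + i₀.1.2.1 ∈ J i₀.1.1 := by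
      rw [add_comm]; exact hcover i₀.1.1 i₀.1.2.1 hα₀ i₀.1.2.2 hm₀
    have hhead : MvPolynomial.coeff (i₀.1.2.2 + i₀.1.2.1)
        (((monomial i₀.1.2.2 (1:A)) • gb i₀.1.2.1 i₀.1.1) i₀.1.1) = 1 := by
      have hap : ((monomial i₀.1.2.2 (1:A)) • gb i₀.1.2.1 i₀.1.1) i₀.1.1
          = monomial i₀.1.2.2 (1:A) * gb i₀.1.2.1 i₀.1.1 i₀.1.1 := rfl
      rw [hap]
      conv_lhs => rw [hgb i₀.1.2.1 i₀.1.1]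
      rw [Pi.add_apply, mul_add, coeff_add]
      have ht1 : coeff (i₀.1.2.2 + i₀.1.2.1)
          (monomial i₀.1.2.2 (1:A) * termV A i₀.1.2.1 i₀.1.1 i₀.1.1) = 1 := by
        rw [termV_apply, if_pos rfl, coeff_monomial_mul, coeff_monomial, if_pos rfl, one_mul]
      have ht2 : coeff (i₀.1.2.2 + i₀.1.2.1)
          (monomial i₀.1.2.2 (1:A) *
            (gb i₀.1.2.1 i₀.1.1 - termV A i₀.1.2.1 i₀.1.1) i₀.1.1) = 0 := by
        rw [coeff_monomial_mul, one_mul]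
        by_contra hne
        have hs : i₀.1.2.1 ∈ ((gb i₀.1.2.1 i₀.1.1 - termV A i₀.1.2.1 i₀.1.1) i₀.1.1).support :=
          MvPolynomial.mem_support_iff.mpr hne
        obtain ⟨hnJ, _⟩ := hG i₀.1.1 i₀.1.2.1 hα₀ i₀.1.1 i₀.1.2.1 hs
        apply hnJ
        have hc0 := hcover i₀.1.1 i₀.1.2.1 hα₀ 0 (by intro j hj; simp at hj)
        simpa using hc0
      rw [ht1, ht2, add_zero]
    have hcross : ∀ i ∈ c.support, i ≠ i₀ →
        coeff (i₀.1.2.2 + i₀.1.2.1)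
          ((c i • ((monomial i.1.2.2 (1:A)) • gb i.1.2.1 i.1.1)) i₀.1.1) = 0 := by
      intro i hi hne
      rw [Pi.smul_apply, MvPolynomial.coeff_smul, smul_eq_mul]
      have hap : ((monomial i.1.2.2 (1:A)) • gb i.1.2.1 i.1.1) i₀.1.1
          = monomial i.1.2.2 (1:A) * gb i.1.2.1 i.1.1 i₀.1.1 := rfl
      rw [hap, coeff_monomial_mul']
      split_ifs with hle
      · rw [one_mul]
        suffices hzero : coeff ((i₀.1.2.2 + i₀.1.2.1) - i.1.2.2) (gb i.1.2.1 i.1.1 i₀.1.1) = 0 by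
          rw [hzero, mul_zero]
        by_contra hnz
        have hs : (i₀.1.2.2 + i₀.1.2.1) - i.1.2.2 ∈ (gb i.1.2.1 i.1.1 i₀.1.1).support :=
          MvPolynomial.mem_support_iff.mpr hnz
        have hsum : i.1.2.2 + ((i₀.1.2.2 + i₀.1.2.1) - i.1.2.2) = i₀.1.2.2 + i₀.1.2.1 :=
          add_tsub_cancel_of_le hle
        have hgbi : gb i.1.2.1 i.1.1 i₀.1.1
            = termV A i.1.2.1 i.1.1 i₀.1.1
              + (gb i.1.2.1 i.1.1 - termV A i.1.2.1 i.1.1) i₀.1.1 := by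
          conv_lhs => rw [hgb i.1.2.1 i.1.1]
          rfl
        rw [hgbi] at hs
        rcases Finset.mem_union.mp (MvPolynomial.support_add hs) with hs1 | hs2
        · rw [termV_apply] at hs1
          by_cases hkk : i₀.1.1 = i.1.1
          · rw [if_pos hkk] at hs1
            have hβα : (i₀.1.2.2 + i₀.1.2.1) - i.1.2.2 = i.1.2.1 := by
              have hcm := MvPolynomial.mem_support_iff.mp hs1
              rw [coeff_monomial] at hcm
              by_contra hne2
              rw [if_neg (fun hh => hne2 hh.symm)] at hcm
              exact hcm rfl
            have hαP : i.1.2.1 ∈ P i₀.1.1 := by rw [hkk]; exact i.2.1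
            have huniq := (hQS i₀.1.1).2.2 (i₀.1.2.2 + i₀.1.2.1) i₀.1.2.1 hα₀ i.1.2.1 hαP
              ⟨i₀.1.2.2, hm₀, by rw [add_comm]⟩
              ⟨i.1.2.2, i.2.2.1, by rw [← hsum, hβα]; exact add_comm _ _⟩
            have hδeq : i₀.1.2.2 = i.1.2.2 := by
              have h5 : i.1.2.2 + i.1.2.1 = i₀.1.2.2 + i₀.1.2.1 := by
                rw [← hβα]; exact hsum
              rw [← huniq] at h5
              exact (add_right_cancel h5).symm
            apply hne
            apply Subtype.ext
            have h6 : i.1 = i₀.1 := by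
              apply Prod.ext
              · exact hkk.symm
              · apply Prod.ext
                · exact huniq.symm
                · exact hδeq.symm
            exact h6
          · rw [if_neg hkk] at hs1
            simp at hs1
        · obtain ⟨hβJ', hdegβ'⟩ := hG i.1.1 i.1.2.1 i.2.1 i₀.1.1 _ hs2
          have hlex : lexLt i₀.1.2.2 i.1.2.2 :=
            hkey i₀.1.1 hβJ' hα₀ hm₀ (by rw [hsum]; exact add_comm _ _)
          have hb0 : degE i₀.1.2.2 ≤ B := hbound i₀.1.1 _
            (by push_cast at hdeg₀ ⊢; linarith [Int.natCast_nonneg (degE i₀.1.2.1)])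
          have henc : mEnc B i₀.1.2.2 < mEnc B i.1.2.2 :=
            mEnc_lt (fun j => le_trans (apply_le_degE _ j) hb0) hlex
          exact absurd (hmax i hi) (not_le.mpr henc)
      · rw [mul_zero]
    have hxc : (x i₀.1.1).coeff (i₀.1.2.2 + i₀.1.2.1) = c i₀ := by
      rw [← hc, Finsupp.sum, Finset.sum_apply, MvPolynomial.coeff_sum,
        Finset.sum_eq_single_of_mem i₀ hi₀ hcross,
        Pi.smul_apply, MvPolynomial.coeff_smul, smul_eq_mul, hhead, mul_one]
    have h0 := hz i₀.1.1 (i₀.1.2.2 + i₀.1.2.1) hγJ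
    rw [hxc] at h0
    exact (Finsupp.mem_support_iff.mp hi₀) h0

end MB
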